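/- arXiv:2006.11912 — 5 statements merged into one kernel-verified Lean document; each statement's English description precedes it below -/
import Mathlib

section
/- Let μ_A, μ_B ∈ (0,1] and r ≥ 0, and define a = (-μ_A + μ_B + (μ_A+μ_B)cosh 2r)/(4μ_A μ_B), b = (μ_A - μ_B + (μ_A+μ_B)cosh 2r)/(4μ_A μ_B), c = ((μ_A+μ_B) sinh 2r)/(4μ_A μ_B). Then a - c²/b < 1/2 if and only if (μ_A - μ_B)/2 + ((μ_A+μ_B)/2)·cosh 2r > 1. -/
open Real

theorem stmt6 (μA μB r : ℝ) (hμA : 0 < μA) (hμA1 : μA ≤ 1) (hμB : 0 < μB) (hμB1 : μB ≤ 1)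
    (hr : 0 ≤ r)
    (a b c : ℝ)
    (ha : a = (-μA + μB + (μA + μB) * Real.cosh (2 * r)) / (4 * μA * μB))
    (hb : b = (μA - μB + (μA + μB) * Real.cosh (2 * r)) / (4 * μA * μB))
    (hc : c = ((μA + μB) * Real.sinh (2 * r)) / (4 * μA * μB)) :
    a - c ^ 2 / b < 1 / 2 ↔
      (μA - μB) / 2 + ((μA + μB) / 2) * Real.cosh (2 * r) > 1 := by
  have hC : 1 ≤ Real.cosh (2 * r) := Real.one_le_cosh _
  have hid : Real.cosh (2 * r) ^ 2 - Real.sinh (2 * r) ^ 2 = 1 :=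
    Real.cosh_sq_sub_sinh_sq _
  have hD : (0 : ℝ) < 4 * μA * μB := by positivity
  have hbnum : 0 < μA - μB + (μA + μB) * Real.cosh (2 * r) := by nlinarith
  have hbpos : 0 < b := by rw [hb]; positivity
  have habc : a * b - c ^ 2 = 1 / (4 * μA * μB) := by
    rw [ha, hb, hc]
    field_simp
    linear_combination (μA + μB) ^ 2 * hid
  have h1 : a - c ^ 2 / b = (a * b - c ^ 2) / b := by
    field_simp
  rw [h1, div_lt_iff₀ hbpos, habc, hb]
  rw [div_lt_iff₀ hD]
  have hmul : 1 / 2 * ((μA - μB + (μA + μB) * Real.cosh (2 * r)) / (4 * μA * μB)) *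
      (4 * μA * μB) = (μA - μB) / 2 + (μA + μB) / 2 * Real.cosh (2 * r) := by
    field_simp
  rw [hmul]
end

section
/- Let μ_A, μ_B ∈ (0,1], r ≥ 0 and ς := (μ_A - μ_B)/2 + ((μ_A+μ_B)/2)·cosh 2r. If ς > 1 then √((μ_A+μ_B)² cosh² 2r − 4μ_A μ_B) > 2 − (μ_A+μ_B) cosh 2r; i.e. nonclassical steerability of a TMST implies its entanglement. -/
open Real

theorem stmt8 (μA μB r : ℝ) (hμA : 0 < μA) (hμA1 : μA ≤ 1) (hμB : 0 < μB) (hμB1 : μB ≤ 1)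
    (hr : 0 ≤ r)
    (ς : ℝ) (hς : ς = (μA - μB) / 2 + ((μA + μB) / 2) * Real.cosh (2 * r))
    (hsteer : ς > 1) :
    Real.sqrt ((μA + μB) ^ 2 * Real.cosh (2 * r) ^ 2 - 4 * μA * μB) >
      2 - (μA + μB) * Real.cosh (2 * r) := by
  set c := Real.cosh (2 * r) with hcdef
  have hc : 1 ≤ c := Real.one_le_cosh (2 * r)
  have hs : (μA + μB) * c > 1 + μA * μB := by
    nlinarith [mul_nonneg (sub_nonneg.2 hμA1) hμB.le]
  have harg : (μA + μB) ^ 2 * c ^ 2 - 4 * μA * μB > 0 := by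
    nlinarith [sq_nonneg (1 - μA * μB), mul_pos hμA hμB]
  rcases le_or_gt (2 - (μA + μB) * c) 0 with h | h
  · exact lt_of_le_of_lt h (Real.sqrt_pos.2 harg)
  · rw [gt_iff_lt, Real.lt_sqrt h.le]
    nlinarith [mul_pos hμA hμB]
end

section
/- Let N_s > 0, N_th > 0, Γ > 0 and define a'(t) = N_th + 1/2 + e^{−Γt}(N_s − N_th), b' = N_s + 1/2, c'(t) = √(e^{−Γt} N_s(1+N_s)). Then a'(t) − c'(t)²/b' < 1/2 if and only if t < (1/Γ)·log(1 + N_s/(N_th(1+2N_s))). -/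
open Real

theorem stmt14 (Ns Nth Γ t : ℝ) (hNs : 0 < Ns) (hNth : 0 < Nth) (hΓ : 0 < Γ)
    (a' b' c' : ℝ)
    (ha : a' = Nth + 1 / 2 + Real.exp (-Γ * t) * (Ns - Nth))
    (hb : b' = Ns + 1 / 2)
    (hc : c' = Real.sqrt (Real.exp (-Γ * t) * Ns * (1 + Ns))) :
    a' - c' ^ 2 / b' < 1 / 2 ↔
      t < (1 / Γ) * Real.log (1 + Ns / (Nth * (1 + 2 * Ns))) := by
  set E := Real.exp (-Γ * t) with hE
  have hEpos : 0 < E := Real.exp_pos _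
  have hbpos : (0:ℝ) < b' := by rw [hb]; linarith
  have hnum : (0:ℝ) < Nth * (2 * Ns + 1) := by positivity
  have hD : (0:ℝ) < Ns + Nth * (2 * Ns + 1) := by positivity
  have key : a' - c' ^ 2 / b' < 1 / 2 ↔
      Nth * (2 * Ns + 1) < E * (Ns + Nth * (2 * Ns + 1)) := by
    rw [ha, hb, hc, sq_sqrt (by positivity)]
    rw [sub_lt_comm, lt_div_iff₀ (show (0:ℝ) < Ns + 1/2 by linarith)]
    constructor <;> intro h <;> nlinarith
  rw [key]
  have hK : 1 + Ns / (Nth * (1 + 2 * Ns)) =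
      (Ns + Nth * (2 * Ns + 1)) / (Nth * (2 * Ns + 1)) := by
    field_simp
    ring
  rw [hK]
  rw [show Nth * (2 * Ns + 1) < E * (Ns + Nth * (2 * Ns + 1)) ↔
      Nth * (2 * Ns + 1) / (Ns + Nth * (2 * Ns + 1)) < E from by
    rw [div_lt_iff₀ hD]]
  rw [hE, ← Real.log_lt_iff_lt_exp (by positivity),
    Real.log_div (by positivity) (by positivity)]
  rw [Real.log_div (by positivity) (by positivity)]
  have hL : (1 / Γ) * (Real.log (Ns + Nth * (2 * Ns + 1)) - Real.log (Nth * (2 * Ns + 1)))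
      = (Real.log (Ns + Nth * (2 * Ns + 1)) - Real.log (Nth * (2 * Ns + 1))) / Γ := by ring
  rw [hL, lt_div_iff₀ hΓ]
  constructor <;> intro h <;> nlinarith
end

section
/- For all N_s > 0 and N_th > 0, (1/Γ)·log(1 + N_s/(N_th(1+2N_s))) < (1/Γ)·log(1 + 1/N_th); i.e., the maximum propagation time for nonclassical steering t_ns is strictly smaller than the entanglement-death time t_ent, even as N_s → ∞. -/
open Real

theorem stmt15 (Ns Nth Γ : ℝ) (hNs : 0 < Ns) (hNth : 0 < Nth) (hΓ : 0 < Γ) :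
    (1 / Γ) * Real.log (1 + Ns / (Nth * (1 + 2 * Ns))) <
      (1 / Γ) * Real.log (1 + 1 / Nth) := by
  have h1 : (0:ℝ) < 1 + 2 * Ns := by linarith
  have hpos : (0:ℝ) < 1 + Ns / (Nth * (1 + 2 * Ns)) := by positivity
  apply mul_lt_mul_of_pos_left _ (by positivity : (0:ℝ) < 1 / Γ)
  apply Real.log_lt_log hpos
  have key : Ns / (Nth * (1 + 2 * Ns)) < 1 / Nth := by
    rw [div_lt_div_iff₀ (by positivity) hNth]
    nlinarith
  linarith
end

section
/- There exist a, b, c₁, c₂ ∈ ℝ (e.g. a = b = 0.9, c₁ = 0.55, c₂ = −0.7) such that (a − c₁²/b)(a − c₂²/b) < 1/4 but a − (min{|c₁|,|c₂|})²/b ≥ 1/2; i.e., EPR-steerability does not imply strong nonclassical steering. -/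
theorem stmt18 :
    ∃ a b c₁ c₂ : ℝ,
      (a - c₁ ^ 2 / b) * (a - c₂ ^ 2 / b) < 1 / 4 ∧
      a - (min |c₁| |c₂|) ^ 2 / b ≥ 1 / 2 := by
  refine ⟨0.9, 0.9, 0.55, -0.7, by norm_num, ?_⟩
  have : min |(0.55:ℝ)| |(-0.7:ℝ)| = 0.55 := by
    rw [abs_of_pos, abs_of_neg] <;> norm_num
  rw [this]; norm_num
end
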